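/- If δ(Φ,Ψ) ≤ ε, then for every finite-dimensional ancilla K₀ and every ensemble E on H ⊗ K₀, the maximal success probabilities satisfy P_succ((Φ⊗id)(E)) ≤ P_succ((Ψ⊗id)(E)) + (ε/2)·P_succ(E). -/

import Mathlib

open scoped Matrix Kronecker ComplexOrder Matrix.Norms.L2Operator

noncomputable section

/-- Square complex matrices indexed by `ι`. -/
abbrev Mat (ι : Type) [Fintype ι] [DecidableEq ι] : Type := Matrix ι ι ℂ

/-- Linear maps between matrix algebras. -/
abbrev MatMap (ι κ : Type) [Fintype ι] [DecidableEq ι] [Fintype κ] [DecidableEq κ] : Type :=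
  Mat ι →ₗ[ℂ] Mat κ

variable {ι κ μ ν : Type} [Fintype ι] [DecidableEq ι] [Fintype κ] [DecidableEq κ]
  [Fintype μ] [DecidableEq μ] [Fintype ν] [DecidableEq ν]

/-- `φ ⊗ id_τ`, the amplification of `φ` with the identity on `Mat τ`. -/
def tensorId (φ : MatMap ι κ) (τ : Type) [Fintype τ] [DecidableEq τ] :
    Matrix (ι × τ) (ι × τ) ℂ →ₗ[ℂ] Matrix (κ × τ) (κ × τ) ℂ where
  toFun X := Matrix.of fun p q => φ (Matrix.of fun i j => X (i, p.2) (j, q.2)) p.1 q.1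
  map_add' X Y := by
    funext p q
    show φ (Matrix.of fun i j => (X + Y) (i, p.2) (j, q.2)) p.1 q.1 = _
    rw [show (Matrix.of fun i j => (X + Y) (i, p.2) (j, q.2))
        = (Matrix.of fun i j => X (i, p.2) (j, q.2))
          + (Matrix.of fun i j => Y (i, p.2) (j, q.2)) from rfl, map_add]
    rfl
  map_smul' c X := by
    funext p q
    show φ (Matrix.of fun i j => (c • X) (i, p.2) (j, q.2)) p.1 q.1 = _
    rw [show (Matrix.of fun i j => (c • X) (i, p.2) (j, q.2))
        = c • (Matrix.of fun i j => X (i, p.2) (j, q.2)) from rfl, map_smul]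
    rfl

/-- `φ` is Hermitian-preserving. -/
def IsHermitianPreserving (φ : MatMap ι κ) : Prop := ∀ X, (φ X)ᴴ = φ Xᴴ

/-- `φ` is completely positive: all amplifications by finite-dimensional identities
preserve positive semidefiniteness. -/
def IsCP (φ : MatMap ι κ) : Prop :=
  ∀ (l : ℕ) (X : Matrix (ι × Fin l) (ι × Fin l) ℂ), X.PosSemidef →
    (tensorId φ (Fin l) X).PosSemidef

/-- `φ` is trace-preserving. -/
def IsTP (φ : MatMap ι κ) : Prop := ∀ X, (φ X).trace = X.trace

/-- A channel is a completely positive trace-preserving map. -/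
def IsChannel (φ : MatMap ι κ) : Prop := IsCP φ ∧ IsTP φ

/-- Density operator. -/
def IsState (σ : Mat ι) : Prop := σ.PosSemidef ∧ σ.trace = 1

/-- The Choi matrix of `φ`. -/
def choiMatrix (φ : MatMap ι κ) : Matrix (κ × ι) (κ × ι) ℂ :=
  Matrix.of fun p q => φ (Matrix.single p.2 q.2 1) p.1 q.1

/-- The tracelike functional `s`. -/
def sFun (φ : MatMap ι ι) : ℂ :=
  ∑ i, ∑ j, φ (Matrix.single i j 1) i j

/-- The pairing `⟨ψ, φ⟩ = s(ψ ∘ φ)`. -/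
def pairing (ψ : MatMap κ ι) (φ : MatMap ι κ) : ℂ := sFun (ψ ∘ₗ φ)

/-- The erasure map `A ↦ Tr[A] σ`. -/
def erasure (σ : Mat κ) : MatMap ι κ :=
  (Matrix.traceLinearMap ι ℂ ℂ).smulRight σ

/-- The diamond norm, via its order-theoretic characterization. -/
noncomputable def diamondNorm (φ : MatMap ι κ) : ℝ :=
  sInf {r : ℝ | 0 < r ∧ ∃ α : MatMap ι κ, IsChannel α ∧
    IsCP ((r : ℂ) • α - φ) ∧ IsCP ((r : ℂ) • α + φ)}

/-- The dual diamond norm, via its order-theoretic characterization. -/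
noncomputable def dualDiamondNorm (ψ : MatMap ι κ) : ℝ :=
  sInf {r : ℝ | 0 < r ∧ ∃ σ : Mat κ, IsState σ ∧
    IsCP ((r : ℂ) • erasure (ι := ι) σ - ψ) ∧ IsCP ((r : ℂ) • erasure (ι := ι) σ + ψ)}

/-- The Hilbert–Schmidt (trace-duality) adjoint of `ψ`. -/
def adjointMap (ψ : MatMap ι κ) : MatMap κ ι where
  toFun A := Matrix.of fun i j => (A * ψ (Matrix.single j i 1)).trace
  map_add' A B := by funext i j; simp [Matrix.add_mul]
  map_smul' c A := by funext i j; simp [Matrix.smul_mul]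

/-- The cq-map associated with a family of operators. -/
def cqMap {n : ℕ} (A : Fin n → Mat ι) : MatMap (Fin n) ι where
  toFun X := ∑ i, X i i • A i
  map_add' X Y := by simp [Matrix.add_apply, add_smul, Finset.sum_add_distrib]
  map_smul' c X := by simp [Matrix.smul_apply, smul_smul, Finset.smul_sum]

/-- The qc-map associated with a family of operators. -/
def qcMap {n : ℕ} (B : Fin n → Mat ι) : MatMap ι (Fin n) where
  toFun X := Matrix.diagonal fun i => (X * B i).trace
  map_add' X Y := by
    funext i j
    by_cases h : i = j <;>
      simp [Matrix.add_mul, Matrix.diagonal, Matrix.of_apply, h]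
  map_smul' c X := by
    funext i j
    by_cases h : i = j <;>
      simp [Matrix.smul_mul, Matrix.diagonal, Matrix.of_apply, h]

/-- A POVM with `n` outcomes. -/
def IsPOVM {n : ℕ} (M : Fin n → Mat ι) : Prop :=
  (∀ i, (M i).PosSemidef) ∧ ∑ i, M i = 1

/-- An ensemble: probabilities with states. -/
def IsEnsemble {n : ℕ} (lam : Fin n → ℝ) (σ : Fin n → Mat ι) : Prop :=
  (∀ i, 0 < lam i) ∧ (∑ i, lam i = 1) ∧ ∀ i, IsState (σ i)

/-- Optimal success probability of guessing among the states of an ensemble. -/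
noncomputable def pSucc {n : ℕ} (lam : Fin n → ℝ) (σ : Fin n → Mat ι) : ℝ :=
  sSup {r : ℝ | ∃ M : Fin n → Mat ι, IsPOVM M ∧
    r = ∑ i, lam i * ((M i * σ i).trace).re}

/-- Trace norm `‖A‖₁ = Tr √(AᴴA)`. -/
noncomputable def traceNorm (A : Mat ι) : ℝ :=
  ((Matrix.posSemidef_conjTranspose_mul_self A).1.eigenvectorUnitary.1 *
    Matrix.diagonal (((↑) : ℝ → ℂ) ∘ (fun x : ℝ => √x) ∘ (Matrix.posSemidef_conjTranspose_mul_self A).1.eigenvalues) *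
    (star (Matrix.posSemidef_conjTranspose_mul_self A).1.eigenvectorUnitary : Mat ι)).trace.re

/-- Le Cam deficiency of `Φ` with respect to `Ψ`. -/
noncomputable def deficiency (Φ : MatMap ι κ) (Ψ : MatMap ι μ) : ℝ :=
  sInf {r : ℝ | ∃ α : MatMap μ κ, IsChannel α ∧ r = diamondNorm (Φ - α ∘ₗ Ψ)}

set_option linter.unusedSectionVars false

/-! ### Auxiliary lemmas -/

section AuxPSD

lemma psd_trace_nonneg {A : Mat ι} (hA : A.PosSemidef) : 0 ≤ A.trace := by
  rw [Matrix.trace]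
  refine Finset.sum_nonneg fun i _ => ?_
  have := hA.dotProduct_mulVec_nonneg (Pi.single i 1)
  simpa [dotProduct, Pi.single_apply, apply_ite] using this

open scoped MatrixOrder in
lemma psd_trace_mul_nonneg {A B : Mat ι} (hA : A.PosSemidef) (hB : B.PosSemidef) :
    0 ≤ (A * B).trace := by
  have hB0 : 0 ≤ B := Matrix.nonneg_iff_posSemidef.mpr hB
  have h : A * B = A * (CFC.sqrt B * CFC.sqrt B) := by rw [CFC.sqrt_mul_sqrt_self B hB0]
  rw [h, ← mul_assoc, Matrix.trace_mul_comm]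
  have h2 : CFC.sqrt B * (A * CFC.sqrt B) = (CFC.sqrt B)ᴴ * A * CFC.sqrt B := by
    rw [(Matrix.nonneg_iff_posSemidef.mp (CFC.sqrt_nonneg B)).isHermitian.eq, mul_assoc]
  rw [h2]
  exact psd_trace_nonneg (hA.conjTranspose_mul_mul_same _)

lemma psd_trace_mul_re_nonneg {A B : Mat ι} (hA : A.PosSemidef) (hB : B.PosSemidef) :
    0 ≤ ((A * B).trace).re :=
  (Complex.nonneg_iff.mp (psd_trace_mul_nonneg hA hB)).1

lemma psd_smul_real {A : Mat ι} (hA : A.PosSemidef) {r : ℝ} (hr : 0 ≤ r) :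
    ((r : ℂ) • A).PosSemidef := by
  refine Matrix.PosSemidef.of_dotProduct_mulVec_nonneg ?_ ?_
  · rw [Matrix.IsHermitian, Matrix.conjTranspose_smul, hA.isHermitian.eq]
    norm_num
  · intro x
    rw [Matrix.smul_mulVec, dotProduct_smul]
    exact smul_nonneg (by exact_mod_cast Complex.zero_le_real.2 hr) (hA.dotProduct_mulVec_nonneg x)

/-- A Hermitian matrix is a difference of two PSD matrices. -/
lemma isHermitian_exists_psd_sub {A : Mat ι} (hA : A.IsHermitian) :
    ∃ P Q : Mat ι, P.PosSemidef ∧ Q.PosSemidef ∧ A = P - Q := by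
  classical
  set U : Mat ι := (Matrix.IsHermitian.eigenvectorUnitary hA : Mat ι)
  refine ⟨U * Matrix.diagonal (fun i => ((max (hA.eigenvalues i) 0 : ℝ) : ℂ)) * star U,
          U * Matrix.diagonal (fun i => ((max (-hA.eigenvalues i) 0 : ℝ) : ℂ)) * star U, ?_, ?_, ?_⟩
  · rw [Matrix.star_eq_conjTranspose]
    exact (Matrix.PosSemidef.diagonal (fun i =>
      Complex.zero_le_real.mpr (le_max_right _ _))).mul_mul_conjTranspose_same U
  · rw [Matrix.star_eq_conjTranspose]
    exact (Matrix.PosSemidef.diagonal (fun i =>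
      Complex.zero_le_real.mpr (le_max_right _ _))).mul_mul_conjTranspose_same U
  · have hd : Matrix.diagonal (fun i => ((max (hA.eigenvalues i) 0 : ℝ) : ℂ))
        - Matrix.diagonal (fun i => ((max (-hA.eigenvalues i) 0 : ℝ) : ℂ))
        = Matrix.diagonal (RCLike.ofReal ∘ hA.eigenvalues) := by
      rw [Matrix.diagonal_sub]
      have hfun : (fun i => ((max (hA.eigenvalues i) 0 : ℝ) : ℂ)
          - ((max (-hA.eigenvalues i) 0 : ℝ) : ℂ)) = RCLike.ofReal ∘ hA.eigenvalues := by
        funext i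
        show _ = ((hA.eigenvalues i : ℝ) : ℂ)
        rw [← Complex.ofReal_sub]
        congr 1
        rcases le_total (hA.eigenvalues i) 0 with h | h
        · rw [max_eq_right h, max_eq_left (by linarith), zero_sub, neg_neg]
        · rw [max_eq_left h, max_eq_right (by linarith), sub_zero]
      rw [hfun]
    rw [← Matrix.sub_mul, ← Matrix.mul_sub, hd]
    exact hA.spectral_theorem

end AuxPSD

section AuxTensor

variable {τ : Type} [Fintype τ] [DecidableEq τ]

lemma tensorId_add_apply (φ ψ : MatMap ι κ) (X : Matrix (ι × τ) (ι × τ) ℂ) :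
    tensorId (φ + ψ) τ X = tensorId φ τ X + tensorId ψ τ X := rfl

lemma tensorId_sub_apply (φ ψ : MatMap ι κ) (X : Matrix (ι × τ) (ι × τ) ℂ) :
    tensorId (φ - ψ) τ X = tensorId φ τ X - tensorId ψ τ X := rfl

lemma tensorId_smul_apply (c : ℂ) (φ : MatMap ι κ) (X : Matrix (ι × τ) (ι × τ) ℂ) :
    tensorId (c • φ) τ X = c • tensorId φ τ X := rfl

lemma tensorId_comp_apply (ψ : MatMap κ μ) (φ : MatMap ι κ) (X : Matrix (ι × τ) (ι × τ) ℂ) :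
    tensorId (ψ ∘ₗ φ) τ X = tensorId ψ τ (tensorId φ τ X) := rfl

lemma tensorId_trace {φ : MatMap ι κ} (hφ : IsTP φ) (X : Matrix (ι × τ) (ι × τ) ℂ) :
    (tensorId φ τ X).trace = X.trace := by
  have key : ∀ p : τ, ∑ a : κ, tensorId φ τ X (a, p) (a, p) = ∑ i : ι, X (i, p) (i, p) := by
    intro p
    have := hφ (Matrix.of fun i j => X (i, p) (j, p))
    show ∑ a : κ, φ (Matrix.of fun i j => X (i, p) (j, p)) a a = _
    simpa [Matrix.trace, Matrix.diag, tensorId] using this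
  rw [Matrix.trace, Matrix.trace]
  simp only [Matrix.diag]
  rw [Fintype.sum_prod_type, Fintype.sum_prod_type, Finset.sum_comm]
  conv_rhs => rw [Finset.sum_comm]
  exact Finset.sum_congr rfl fun p _ => key p

lemma tensorId_psd {φ : MatMap ι κ} (hφ : IsCP φ) {l : ℕ}
    {X : Matrix (ι × Fin l) (ι × Fin l) ℂ} (hX : X.PosSemidef) :
    (tensorId φ (Fin l) X).PosSemidef := hφ l X hX

end AuxTensor

section AuxAdj

lemma trace_mul_expand (A B : Mat ι) : (A * B).trace = ∑ a : ι, ∑ b : ι, A a b * B b a := by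
  simp [Matrix.trace, Matrix.diag, Matrix.mul_apply]

lemma adjointMap_apply' (T : MatMap ι κ) (M : Mat κ) (i j : ι) :
    adjointMap T M i j = (M * T (Matrix.single j i 1)).trace := rfl

lemma trace_adjointMap_mul (T : MatMap ι κ) (M : Mat κ) (X : Mat ι) :
    (adjointMap T M * X).trace = (M * T X).trace := by
  have hX : X = ∑ i : ι, ∑ j : ι, X i j • Matrix.single i j (1 : ℂ) := by
    conv_lhs => rw [Matrix.matrix_eq_sum_single X]
    refine Finset.sum_congr rfl fun i _ => Finset.sum_congr rfl fun j _ => ?_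
    rw [Matrix.smul_single, smul_eq_mul, mul_one]
  conv_rhs => rw [hX]
  rw [map_sum, Matrix.mul_sum, Matrix.trace_sum]
  rw [trace_mul_expand, Finset.sum_comm]
  refine Finset.sum_congr rfl fun a _ => ?_
  rw [map_sum, Matrix.mul_sum, Matrix.trace_sum]
  refine Finset.sum_congr rfl fun b _ => ?_
  rw [map_smul, Matrix.mul_smul, Matrix.trace_smul, adjointMap_apply']
  rw [smul_eq_mul, mul_comm]

lemma adjointMap_one {T : MatMap ι κ} (hT : IsTP T) : adjointMap T (1 : Mat κ) = 1 := by
  funext i j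
  show (1 * T (Matrix.single j i 1)).trace = (1 : Mat ι) i j
  rw [one_mul, hT]
  by_cases h : i = j
  · subst h
    rw [Matrix.trace_single_eq_same, Matrix.one_apply_eq]
  · rw [Matrix.trace_single_eq_of_ne j i 1 (Ne.symm h), Matrix.one_apply_ne h]

end AuxAdj

section AuxPos

lemma positive_hermitianPreserving {T : MatMap ι κ}
    (hT : ∀ X : Mat ι, X.PosSemidef → (T X).PosSemidef) :
    IsHermitianPreserving T := by
  have herm : ∀ X : Mat ι, X.IsHermitian → (T X).IsHermitian := by
    intro X hX
    obtain ⟨P, Q, hP, hQ, hPQ⟩ := isHermitian_exists_psd_sub hX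
    rw [hPQ, map_sub]
    exact Matrix.IsHermitian.sub (hT P hP).isHermitian (hT Q hQ).isHermitian
  intro X
  obtain ⟨A, hA⟩ : ∃ A : Mat ι, A = (1/2 : ℂ) • (X + Xᴴ) := ⟨_, rfl⟩
  obtain ⟨B, hB⟩ : ∃ B : Mat ι, B = (Complex.I/2 : ℂ) • (Xᴴ - X) := ⟨_, rfl⟩
  have hstarI : star Complex.I = -Complex.I := by simp
  have hstarI2 : star (Complex.I/2) = -(Complex.I/2) := by simp [neg_div]
  have hAh : A.IsHermitian := by
    rw [Matrix.IsHermitian, hA, Matrix.conjTranspose_smul, Matrix.conjTranspose_add,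
      Matrix.conjTranspose_conjTranspose, add_comm]
    congr 1
    simp
  have hBh : B.IsHermitian := by
    rw [Matrix.IsHermitian, hB, Matrix.conjTranspose_smul, Matrix.conjTranspose_sub,
      Matrix.conjTranspose_conjTranspose, hstarI2, neg_smul, ← smul_neg, neg_sub]
  have hXdec : X = A + Complex.I • B := by
    rw [hA, hB]
    funext p q
    simp only [Matrix.add_apply, Matrix.smul_apply, Matrix.sub_apply,
      Matrix.conjTranspose_apply, smul_eq_mul]
    field_simp
    ring_nf
    rw [Complex.I_sq]
    ring
  have hXHdec : Xᴴ = A - Complex.I • B := by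
    conv_lhs => rw [hXdec]
    rw [Matrix.conjTranspose_add, Matrix.conjTranspose_smul, hAh.eq, hBh.eq, hstarI,
      neg_smul, sub_eq_add_neg]
  have e1 : (T X)ᴴ = T A - Complex.I • T B := by
    conv_lhs => rw [hXdec]
    rw [map_add, map_smul, Matrix.conjTranspose_add, Matrix.conjTranspose_smul,
      (herm A hAh).eq, (herm B hBh).eq, hstarI, neg_smul, sub_eq_add_neg]
  have e2 : T Xᴴ = T A - Complex.I • T B := by
    rw [hXHdec, map_sub, map_smul]
  rw [e1, e2]

lemma psd_vecMulVec (x : ι → ℂ) : (Matrix.vecMulVec x (star x)).PosSemidef := by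
  refine Matrix.PosSemidef.of_dotProduct_mulVec_nonneg ?_ ?_
  · funext i j
    simp [Matrix.conjTranspose_apply, Matrix.vecMulVec_apply, mul_comm]
  · intro y
    have : dotProduct (star y) ((Matrix.vecMulVec x (star x)) *ᵥ y)
        = (dotProduct (star y) x) * star (dotProduct (star y) x) := by
      simp only [dotProduct, Matrix.mulVec, Matrix.vecMulVec_apply, Pi.star_apply,
        Finset.mul_sum, Finset.sum_mul, star_sum, star_mul', star_star]
      rw [Finset.sum_comm]
      refine Finset.sum_congr rfl fun i _ => Finset.sum_congr rfl fun j _ => ?_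
      ring
    rw [this]
    exact mul_star_self_nonneg _

lemma trace_mul_vecMulVec (A : Mat ι) (x : ι → ℂ) :
    (A * Matrix.vecMulVec x (star x)).trace = dotProduct (star x) (A *ᵥ x) := by
  rw [trace_mul_expand]
  simp only [Matrix.vecMulVec_apply, dotProduct, Matrix.mulVec, Pi.star_apply,
    dotProduct, Finset.mul_sum]
  refine Finset.sum_congr rfl fun i _ => Finset.sum_congr rfl fun j _ => ?_
  ring

lemma stdBasis_conjT (i j : ι) :
    (Matrix.single i j (1 : ℂ))ᴴ = Matrix.single j i 1 := by
  funext a b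
  simp only [Matrix.conjTranspose_apply, Matrix.single, Matrix.of_apply]
  rw [apply_ite star]
  simp [and_comm]

lemma adjointMap_posSemidef {T : MatMap ι κ}
    (hT : ∀ X : Mat ι, X.PosSemidef → (T X).PosSemidef)
    {M : Mat κ} (hM : M.PosSemidef) : (adjointMap T M).PosSemidef := by
  have hHP := positive_hermitianPreserving hT
  refine Matrix.PosSemidef.of_dotProduct_mulVec_nonneg ?_ ?_
  · funext i j
    show star (adjointMap T M j i) = adjointMap T M i j
    rw [adjointMap_apply', adjointMap_apply']
    rw [← Matrix.trace_conjTranspose, Matrix.conjTranspose_mul, hHP _, stdBasis_conjT,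
      hM.isHermitian.eq, Matrix.trace_mul_comm]
  · intro x
    have h1 : dotProduct (star x) ((adjointMap T M) *ᵥ x)
        = (M * T (Matrix.vecMulVec x (star x))).trace := by
      rw [← trace_adjointMap_mul, trace_mul_vecMulVec]
    rw [h1]
    exact psd_trace_mul_nonneg hM (hT _ (psd_vecMulVec x))

lemma adjointMap_povm {n : ℕ} {T : MatMap ι κ}
    (hT : ∀ X : Mat ι, X.PosSemidef → (T X).PosSemidef) (hTP : IsTP T)
    {M : Fin n → Mat κ} (hM : IsPOVM M) :
    IsPOVM (fun i => adjointMap T (M i)) := by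
  refine ⟨fun i => adjointMap_posSemidef hT (hM.1 i), ?_⟩
  rw [← map_sum, hM.2, adjointMap_one hTP]

end AuxPos

section AuxPSucc

variable {n : ℕ}

lemma povm_term_le_one {lam : Fin n → ℝ} {σ : Fin n → Mat ι}
    (hlam : ∀ i, 0 ≤ lam i) (hsum : ∑ i, lam i = 1) (hst : ∀ i, IsState (σ i))
    {M : Fin n → Mat ι} (hM : IsPOVM M) :
    ∑ i, lam i * ((M i * σ i).trace).re ≤ 1 := by
  have key : ∀ i, ((M i * σ i).trace).re ≤ 1 := by
    intro i
    have h1 : ∀ j, 0 ≤ ((M j * σ i).trace).re :=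
      fun j => psd_trace_mul_re_nonneg (hM.1 j) (hst i).1
    have h2 : ∑ j, ((M j * σ i).trace).re = 1 := by
      have : ∑ j, (M j * σ i).trace = 1 := by
        rw [← Matrix.trace_sum, ← Finset.sum_mul, hM.2, one_mul, (hst i).2]
      calc ∑ j, ((M j * σ i).trace).re = ((∑ j, (M j * σ i).trace)).re := by
            rw [Complex.re_sum]
        _ = 1 := by rw [this]; simp
      
    calc ((M i * σ i).trace).re ≤ ∑ j, ((M j * σ i).trace).re :=
          Finset.single_le_sum (fun j _ => h1 j) (Finset.mem_univ i)
      _ = 1 := h2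
  calc ∑ i, lam i * ((M i * σ i).trace).re ≤ ∑ i, lam i * 1 :=
        Finset.sum_le_sum fun i _ => mul_le_mul_of_nonneg_left (key i) (hlam i)
    _ = 1 := by simp only [mul_one]; exact hsum

lemma pSucc_bddAbove {lam : Fin n → ℝ} {σ : Fin n → Mat ι}
    (hlam : ∀ i, 0 ≤ lam i) (hsum : ∑ i, lam i = 1) (hst : ∀ i, IsState (σ i)) :
    BddAbove {r : ℝ | ∃ M : Fin n → Mat ι, IsPOVM M ∧
      r = ∑ i, lam i * ((M i * σ i).trace).re} := by
  refine ⟨1, fun r hr => ?_⟩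
  obtain ⟨M, hM, rfl⟩ := hr
  exact povm_term_le_one hlam hsum hst hM

lemma value_le_pSucc {lam : Fin n → ℝ} {σ : Fin n → Mat ι}
    (hlam : ∀ i, 0 ≤ lam i) (hsum : ∑ i, lam i = 1) (hst : ∀ i, IsState (σ i))
    {M : Fin n → Mat ι} (hM : IsPOVM M) :
    ∑ i, lam i * ((M i * σ i).trace).re ≤ pSucc lam σ :=
  le_csSup (pSucc_bddAbove hlam hsum hst) ⟨M, hM, rfl⟩

lemma exists_povm (hn : 0 < n) : ∃ M : Fin n → Mat ι, IsPOVM M := by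
  refine ⟨fun i => if i = ⟨0, hn⟩ then 1 else 0, ⟨fun i => ?_, ?_⟩⟩
  · show Matrix.PosSemidef (if i = ⟨0, hn⟩ then (1 : Mat ι) else 0)
    by_cases hh : i = ⟨0, hn⟩
    · rw [if_pos hh]; exact Matrix.PosSemidef.one
    · rw [if_neg hh]; exact Matrix.PosSemidef.zero
  · show (∑ i : Fin n, if i = ⟨0, hn⟩ then (1 : Mat ι) else 0) = 1
    rw [Finset.sum_ite_eq' Finset.univ (⟨0, hn⟩ : Fin n) (fun _ => (1 : Mat ι))]
    rw [if_pos (Finset.mem_univ _)]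
  
lemma pSucc_nonneg {lam : Fin n → ℝ} {σ : Fin n → Mat ι} (hn : 0 < n)
    (hlam : ∀ i, 0 ≤ lam i) (hsum : ∑ i, lam i = 1) (hst : ∀ i, IsState (σ i)) :
    0 ≤ pSucc lam σ := by
  obtain ⟨M, hM⟩ := exists_povm (ι := ι) hn
  refine le_trans ?_ (value_le_pSucc hlam hsum hst hM)
  exact Finset.sum_nonneg fun i _ =>
    mul_nonneg (hlam i) (psd_trace_mul_re_nonneg (hM.1 i) (hst i).1)

lemma pSucc_le_one {lam : Fin n → ℝ} {σ : Fin n → Mat ι}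
    (hlam : ∀ i, 0 ≤ lam i) (hsum : ∑ i, lam i = 1) (hst : ∀ i, IsState (σ i)) :
    pSucc lam σ ≤ 1 := by
  refine Real.sSup_le (fun r hr => ?_) zero_le_one
  obtain ⟨M, hM, rfl⟩ := hr
  exact povm_term_le_one hlam hsum hst hM

end AuxPSucc

section AuxChannel

lemma isChannel_erasure_std (e : κ) :
    IsChannel (erasure (ι := ι) (Matrix.single e e 1)) := by
  constructor
  · intro l X hX
    have hCdef : ∃ C : ι → Matrix (κ × Fin l) (ι × Fin l) ℂ, C = fun i =>
        Matrix.of fun ap jq => if e = ap.1 ∧ jq.1 = i ∧ ap.2 = jq.2 then 1 else 0 := ⟨_, rfl⟩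
    obtain ⟨C, hC⟩ := hCdef
    have key : tensorId (erasure (ι := ι) (Matrix.single e e 1)) (Fin l) X
        = ∑ i : ι, (C i) * X * (C i)ᴴ := by
      funext ap bq
      obtain ⟨a, p⟩ := ap
      obtain ⟨b, q⟩ := bq
      show ((Matrix.of fun i j => X (i, p) (j, q)).trace
          • Matrix.single e e (1 : ℂ)) a b = _
      simp only [Matrix.smul_apply, smul_eq_mul, Matrix.trace, Matrix.diag, Matrix.of_apply,
        Matrix.single, Matrix.sum_apply, Matrix.mul_apply, Matrix.conjTranspose_apply,
        hC, Fintype.sum_prod_type, ite_and, star_one, star_zero, ite_mul, mul_ite,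
        one_mul, mul_one, zero_mul, mul_zero, Finset.sum_ite_eq, Finset.sum_ite_eq',
        Finset.mem_univ, if_true, Finset.sum_const_zero]
      by_cases ha : e = a
      · subst ha
        by_cases hb : e = b
        · subst hb
          simp [apply_ite (starRingEnd ℂ)]
        · simp [hb, apply_ite (starRingEnd ℂ)]
      · simp [ha, apply_ite (starRingEnd ℂ)]
    rw [key]
    have psum : ∀ s : Finset ι, (∑ i ∈ s, (C i) * X * (C i)ᴴ).PosSemidef := by
      intro s
      induction s using Finset.induction_on with
      | empty => simpa using Matrix.PosSemidef.zero
      | insert _ _ hni ih =>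
          rw [Finset.sum_insert hni]
          exact Matrix.PosSemidef.add (hX.mul_mul_conjTranspose_same _) ih
    exact psum Finset.univ
  · intro X
    show ((X.trace) • Matrix.single e e (1:ℂ)).trace = X.trace
    rw [Matrix.trace_smul, Matrix.trace_single_eq_same, smul_eq_mul, mul_one]

end AuxChannel

section AuxMore

lemma diamondNorm_nonneg (φ : MatMap ι κ) : 0 ≤ diamondNorm φ :=
  Real.sInf_nonneg fun r hr => le_of_lt hr.1

lemma isChannel_comp {α : MatMap κ μ} {Ψ : MatMap ι κ} (hα : IsChannel α) (hΨ : IsChannel Ψ) :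
    IsChannel (α ∘ₗ Ψ) := by
  constructor
  · intro l X hx
    have : tensorId (α ∘ₗ Ψ) (Fin l) X = tensorId α (Fin l) (tensorId Ψ (Fin l) X) :=
      tensorId_comp_apply α Ψ X
    rw [this]
    exact hα.1 l _ (hΨ.1 l X hx)
  · intro X
    show (α (Ψ X)).trace = _
    rw [hα.2, hΨ.2]

lemma isState_tensorId {φ : MatMap ι κ} (hφ : IsChannel φ) {l : ℕ}
    {ρ : Mat (ι × Fin l)} (hρ : IsState ρ) : IsState (tensorId φ (Fin l) ρ) :=
  ⟨hφ.1 l ρ hρ.1, by rw [tensorId_trace hφ.2, hρ.2]⟩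

lemma half_complex : ((1/2 : ℝ) : ℂ) = (1/2 : ℂ) := by norm_num

lemma diamond_set_nonempty {Φ' G : MatMap ι κ} (hΦ' : IsChannel Φ') (hG : IsChannel G) :
    {r : ℝ | 0 < r ∧ ∃ α : MatMap ι κ, IsChannel α ∧
      IsCP ((r : ℂ) • α - (Φ' - G)) ∧ IsCP ((r : ℂ) • α + (Φ' - G))}.Nonempty := by
  have hm : ((2:ℝ) : ℂ) • ((1/2 : ℂ) • (Φ' + G)) - (Φ' - G) = ((2:ℝ) : ℂ) • G := by
    apply LinearMap.ext
    intro X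
    simp only [LinearMap.sub_apply, LinearMap.smul_apply, LinearMap.add_apply]
    rw [smul_smul]
    push_cast
    norm_num [two_smul]
  have hp : ((2:ℝ) : ℂ) • ((1/2 : ℂ) • (Φ' + G)) + (Φ' - G) = ((2:ℝ) : ℂ) • Φ' := by
    apply LinearMap.ext
    intro X
    simp only [LinearMap.add_apply, LinearMap.smul_apply, LinearMap.sub_apply]
    rw [smul_smul]
    push_cast
    norm_num [two_smul]
  refine ⟨2, by norm_num, (1/2 : ℂ) • (Φ' + G), ⟨?_, ?_⟩, ?_, ?_⟩
  · intro l X hx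
    have : tensorId ((1/2 : ℂ) • (Φ' + G)) (Fin l) X
        = ((1/2 : ℝ) : ℂ) • (tensorId Φ' (Fin l) X + tensorId G (Fin l) X) := by
      rw [tensorId_smul_apply, tensorId_add_apply, half_complex]
    rw [this]
    exact psd_smul_real ((hΦ'.1 l X hx).add (hG.1 l X hx)) (by norm_num)
  · intro X
    show ((1/2 : ℂ) • (Φ' X + G X)).trace = X.trace
    rw [Matrix.trace_smul, Matrix.trace_add, hΦ'.2, hG.2, smul_eq_mul]
    ring
  · intro l X hx
    rw [show (tensorId (((2:ℝ):ℂ) • ((1/2 : ℂ) • (Φ' + G)) - (Φ' - G)) (Fin l)) X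
        = ((2:ℝ) : ℂ) • tensorId G (Fin l) X from by rw [hm, tensorId_smul_apply]]
    exact psd_smul_real (hG.1 l X hx) (by norm_num)
  · intro l X hx
    rw [show (tensorId (((2:ℝ):ℂ) • ((1/2 : ℂ) • (Φ' + G)) + (Φ' - G)) (Fin l)) X
        = ((2:ℝ) : ℂ) • tensorId Φ' (Fin l) X from by rw [hp, tensorId_smul_apply]]
    exact psd_smul_real (hΦ'.1 l X hx) (by norm_num)

end AuxMore

theorem deficiency_le_imp_pSucc {h k k' : ℕ}
    (Φ : MatMap (Fin h) (Fin k)) (Ψ : MatMap (Fin h) (Fin k'))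
    (hΦ : IsChannel Φ) (hΨ : IsChannel Ψ) (ε : ℝ)
    (hδ : deficiency Φ Ψ ≤ ε) :
    ∀ (k₀ n : ℕ) (lam : Fin n → ℝ) (σ : Fin n → Mat (Fin h × Fin k₀)),
      IsEnsemble lam σ →
      pSucc lam (fun i => tensorId Φ (Fin k₀) (σ i)) ≤
        pSucc lam (fun i => tensorId Ψ (Fin k₀) (σ i)) + ε / 2 * pSucc lam σ := by
  intro k₀ n lam σ hE
  obtain ⟨hlam, hsum, hstate⟩ := hE
  have hlam0 : ∀ i, 0 ≤ lam i := fun i => (hlam i).le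
  have hn : 0 < n := by
    by_contra hcon
    push_neg at hcon
    have h0 : n = 0 := Nat.le_zero.mp hcon
    subst h0
    simp at hsum
  have hh : 0 < h := by
    by_contra hcon
    push_neg at hcon
    have h0 : h = 0 := Nat.le_zero.mp hcon
    have htr := (hstate ⟨0, hn⟩).2
    subst h0
    simp [Matrix.trace] at htr
  have hk : 0 < k := by
    by_contra hcon
    push_neg at hcon
    have h0 : k = 0 := Nat.le_zero.mp hcon
    subst h0
    have htp := hΦ.2 (Matrix.single (⟨0, hh⟩ : Fin h) ⟨0, hh⟩ 1)
    rw [Matrix.trace_single_eq_same] at htp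
    simp [Matrix.trace] at htp
  have hstΦ : ∀ i, IsState (tensorId Φ (Fin k₀) (σ i)) :=
    fun i => isState_tensorId hΦ (hstate i)
  have hstΨ : ∀ i, IsState (tensorId Ψ (Fin k₀) (σ i)) :=
    fun i => isState_tensorId hΨ (hstate i)
  have hε : 0 ≤ ε := by
    refine le_trans ?_ hδ
    refine Real.sInf_nonneg fun t ht => ?_
    obtain ⟨α, hα, rfl⟩ := ht
    exact diamondNorm_nonneg _
  have hpE0 : 0 ≤ pSucc lam σ := pSucc_nonneg hn hlam0 hsum hstate
  have hpΨ0 : 0 ≤ pSucc lam (fun i => tensorId Ψ (Fin k₀) (σ i)) :=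
    pSucc_nonneg hn hlam0 hsum hstΨ
  have hpE1 : pSucc lam σ ≤ 1 := pSucc_le_one hlam0 hsum hstate
  refine le_of_forall_pos_le_add fun δ hδ' => ?_
  -- extract a channel α and a bound r
  have hdefset : {t : ℝ | ∃ α : MatMap (Fin k') (Fin k), IsChannel α ∧
      t = diamondNorm (Φ - α ∘ₗ Ψ)}.Nonempty :=
    ⟨_, erasure (Matrix.single (⟨0, hk⟩ : Fin k) ⟨0, hk⟩ 1),
      isChannel_erasure_std _, rfl⟩
  have hlt : deficiency Φ Ψ < ε + δ / 2 := lt_of_le_of_lt hδ (by linarith)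
  obtain ⟨t, ht, hlt2⟩ := exists_lt_of_csInf_lt hdefset hlt
  obtain ⟨α, hαch, rfl⟩ := ht
  have hdn : diamondNorm (Φ - α ∘ₗ Ψ) < ε + δ := by linarith
  obtain ⟨r, hrmem, hrlt⟩ :=
    exists_lt_of_csInf_lt (diamond_set_nonempty hΦ (isChannel_comp hαch hΨ)) hdn
  obtain ⟨hr0, β, hβch, hCPm, hCPp⟩ := hrmem
  have hrne : (r : ℂ) ≠ 0 := by
    exact_mod_cast ne_of_gt hr0
  -- the trace-annihilating difference
  have hΔtr : ∀ X : Mat (Fin h), ((Φ - α ∘ₗ Ψ) X).trace = 0 := by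
    intro X
    rw [LinearMap.sub_apply, Matrix.trace_sub, hΦ.2]
    show _ - (α (Ψ X)).trace = 0
    rw [hαch.2, hΨ.2, sub_self]
  -- the normalized channel γ
  have hγTP : IsTP ((r : ℂ)⁻¹ • ((r : ℂ) • β + (Φ - α ∘ₗ Ψ))) := by
    intro X
    show ((r : ℂ)⁻¹ • (((r : ℂ) • β + (Φ - α ∘ₗ Ψ)) X)).trace = X.trace
    rw [Matrix.trace_smul, LinearMap.add_apply, Matrix.trace_add, LinearMap.smul_apply,
      Matrix.trace_smul, hΔtr, hβch.2, add_zero, smul_eq_mul, smul_eq_mul, ← mul_assoc,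
      inv_mul_cancel₀ hrne, one_mul]
  have hγpos : ∀ Y : Mat (Fin h × Fin k₀), Y.PosSemidef →
      ((tensorId ((r : ℂ)⁻¹ • ((r : ℂ) • β + (Φ - α ∘ₗ Ψ))) (Fin k₀)) Y).PosSemidef := by
    intro Y hY
    rw [tensorId_smul_apply, show (r : ℂ)⁻¹ = ((r⁻¹ : ℝ) : ℂ) from (Complex.ofReal_inv r).symm]
    exact psd_smul_real (hCPp k₀ Y hY) (inv_nonneg.mpr hr0.le)
  have hTαpos : ∀ Y : Mat (Fin k' × Fin k₀), Y.PosSemidef →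
      ((tensorId α (Fin k₀)) Y).PosSemidef := fun Y hY => hαch.1 k₀ Y hY
  have hTαTP : IsTP (tensorId α (Fin k₀)) := fun Y => tensorId_trace hαch.2 Y
  have hTγTP : IsTP (tensorId ((r : ℂ)⁻¹ • ((r : ℂ) • β + (Φ - α ∘ₗ Ψ))) (Fin k₀)) :=
    fun Y => tensorId_trace hγTP Y
  -- bound the supremum
  refine Real.sSup_le (fun v hv => ?_)
    (by positivity)
  obtain ⟨M, hM, rfl⟩ := hv
  set N := fun i => adjointMap (tensorId α (Fin k₀)) (M i) with hN
  set K := fun i => adjointMap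
    (tensorId ((r : ℂ)⁻¹ • ((r : ℂ) • β + (Φ - α ∘ₗ Ψ))) (Fin k₀)) (M i) with hK
  have hNpovm : IsPOVM N := adjointMap_povm hTαpos hTαTP hM
  have hKpovm : IsPOVM K := adjointMap_povm hγpos hTγTP hM
  have hterm : ∀ i, ((M i * tensorId Φ (Fin k₀) (σ i)).trace).re
      ≤ ((N i * tensorId Ψ (Fin k₀) (σ i)).trace).re + r / 2 * ((K i * σ i).trace).re := by
    intro i
    have hφeq : Φ = α ∘ₗ Ψ + (Φ - α ∘ₗ Ψ) := by abel
    have hsplit : tensorId Φ (Fin k₀) (σ i)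
        = tensorId (α ∘ₗ Ψ) (Fin k₀) (σ i) + tensorId (Φ - α ∘ₗ Ψ) (Fin k₀) (σ i) := by
      conv_lhs => rw [hφeq]
      exact tensorId_add_apply _ _ _
    have e1 : (M i * tensorId (α ∘ₗ Ψ) (Fin k₀) (σ i)).trace
        = (N i * tensorId Ψ (Fin k₀) (σ i)).trace := by
      rw [hN, trace_adjointMap_mul, ← tensorId_comp_apply]
    have hGH : tensorId (Φ - α ∘ₗ Ψ) (Fin k₀) (σ i)
        = ((r / 2 : ℝ) : ℂ) • tensorId ((r : ℂ)⁻¹ • ((r : ℂ) • β + (Φ - α ∘ₗ Ψ))) (Fin k₀) (σ i)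
          - ((1 / 2 : ℝ) : ℂ) • tensorId ((r : ℂ) • β - (Φ - α ∘ₗ Ψ)) (Fin k₀) (σ i) := by
      have h1 : tensorId ((r : ℂ)⁻¹ • ((r : ℂ) • β + (Φ - α ∘ₗ Ψ))) (Fin k₀) (σ i)
          = (r : ℂ)⁻¹ • ((r : ℂ) • tensorId β (Fin k₀) (σ i)
            + tensorId (Φ - α ∘ₗ Ψ) (Fin k₀) (σ i)) := by
        rw [tensorId_smul_apply, tensorId_add_apply, tensorId_smul_apply]
      have h2 : tensorId ((r : ℂ) • β - (Φ - α ∘ₗ Ψ)) (Fin k₀) (σ i)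
          = (r : ℂ) • tensorId β (Fin k₀) (σ i) - tensorId (Φ - α ∘ₗ Ψ) (Fin k₀) (σ i) := by
        rw [tensorId_sub_apply, tensorId_smul_apply]
      rw [h1, h2]
      generalize tensorId β (Fin k₀) (σ i) = u
      generalize tensorId (Φ - α ∘ₗ Ψ) (Fin k₀) (σ i) = v
      rw [smul_smul]
      have hc : ((r / 2 : ℝ) : ℂ) * (r : ℂ)⁻¹ = ((1 / 2 : ℝ) : ℂ) := by
        push_cast
        field_simp
      rw [hc, smul_add, smul_sub]
      rw [show ∀ x y : Matrix (Fin k × Fin k₀) (Fin k × Fin k₀) ℂ, x + y - (x - y) = y + y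
        from fun x y => by abel]
      rw [← add_smul]
      push_cast
      norm_num
    have hQpsd : (((1 / 2 : ℝ) : ℂ) • tensorId ((r : ℂ) • β - (Φ - α ∘ₗ Ψ)) (Fin k₀)
        (σ i)).PosSemidef := psd_smul_real (hCPm k₀ (σ i) (hstate i).1) (by norm_num)
    have e2 : ((M i * tensorId (Φ - α ∘ₗ Ψ) (Fin k₀) (σ i)).trace).re
        ≤ r / 2 * ((K i * σ i).trace).re := by
      rw [hGH, Matrix.mul_sub, Matrix.trace_sub, Complex.sub_re]
      have hsecond : 0 ≤ ((M i * (((1 / 2 : ℝ) : ℂ) •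
          tensorId ((r : ℂ) • β - (Φ - α ∘ₗ Ψ)) (Fin k₀) (σ i))).trace).re :=
        psd_trace_mul_re_nonneg (hM.1 i) hQpsd
      have hfirst : ((M i * (((r / 2 : ℝ) : ℂ) •
          tensorId ((r : ℂ)⁻¹ • ((r : ℂ) • β + (Φ - α ∘ₗ Ψ))) (Fin k₀) (σ i))).trace).re
          = r / 2 * ((K i * σ i).trace).re := by
        rw [Matrix.mul_smul, Matrix.trace_smul, smul_eq_mul, Complex.re_ofReal_mul, hK,
          trace_adjointMap_mul]
      linarith
    rw [hsplit, Matrix.mul_add, Matrix.trace_add, Complex.add_re, e1]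
    linarith
  have hsum1 : ∑ i, lam i * ((M i * tensorId Φ (Fin k₀) (σ i)).trace).re
      ≤ (∑ i, lam i * ((N i * tensorId Ψ (Fin k₀) (σ i)).trace).re)
        + r / 2 * (∑ i, lam i * ((K i * σ i).trace).re) := by
    rw [Finset.mul_sum, ← Finset.sum_add_distrib]
    refine Finset.sum_le_sum fun i _ => ?_
    have := mul_le_mul_of_nonneg_left (hterm i) (hlam0 i)
    calc lam i * ((M i * tensorId Φ (Fin k₀) (σ i)).trace).re
        ≤ lam i * (((N i * tensorId Ψ (Fin k₀) (σ i)).trace).re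
          + r / 2 * ((K i * σ i).trace).re) := this
      _ = lam i * ((N i * tensorId Ψ (Fin k₀) (σ i)).trace).re
          + r / 2 * (lam i * ((K i * σ i).trace).re) := by ring
  have hΨbound : ∑ i, lam i * ((N i * tensorId Ψ (Fin k₀) (σ i)).trace).re
      ≤ pSucc lam (fun i => tensorId Ψ (Fin k₀) (σ i)) :=
    value_le_pSucc hlam0 hsum hstΨ hNpovm
  have hEbound : ∑ i, lam i * ((K i * σ i).trace).re ≤ pSucc lam σ :=
    value_le_pSucc hlam0 hsum hstate hKpovm
  have hKnonneg : 0 ≤ ∑ i, lam i * ((K i * σ i).trace).re :=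
    Finset.sum_nonneg fun i _ =>
      mul_nonneg (hlam0 i) (psd_trace_mul_re_nonneg (hKpovm.1 i) (hstate i).1)
  have step2 : r / 2 * (∑ i, lam i * ((K i * σ i).trace).re) ≤ r / 2 * pSucc lam σ :=
    mul_le_mul_of_nonneg_left hEbound (by positivity)
  have final : r / 2 * pSucc lam σ ≤ ε / 2 * pSucc lam σ + δ := by
    nlinarith [hpE0, hpE1, hrlt, hδ'.le]
  linarith
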